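/- Every homeomorphism Ψ : 𝕄* → 𝕄* induces a homeomorphism H_Ψ : ℕ* → ℕ* satisfying H_Ψ ∘ π = π ∘ Ψ; equivalently, Ψ(π⁻¹({u})) = π⁻¹({H_Ψ(u)}) for every u ∈ ℕ*. -/

import Mathlib

open Set Topology Filter

noncomputable section

/-- The unit interval `[0,1] ⊆ ℝ`. -/
abbrev UnitI : Type := Set.Icc (0:ℝ) 1

/-- The space `𝕄 = ℕ × [0,1]`. -/
abbrev Mspace : Type := ℕ × UnitI

/-- `β𝕄`, the Stone–Čech compactification of `𝕄`. -/
abbrev betaM : Type := StoneCech Mspace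

/-- The copy of `𝕄` inside `β𝕄`. -/
def Mcopy : Set betaM := Set.range (stoneCechUnit : Mspace → betaM)

/-- `𝕄* = β𝕄 ∖ 𝕄`. -/
def MstarS : Set betaM := Mcopyᶜ

/-- `βℕ`, realized as the space of ultrafilters on `ℕ`. -/
abbrev betaN : Type := Ultrafilter ℕ

/-- The copy of `ℕ` inside `βℕ` (the principal ultrafilters). -/
def Ncopy : Set betaN := Set.range (pure : ℕ → betaN)

/-- `ℕ* = βℕ ∖ ℕ`. -/
def NstarS : Set betaN := Ncopyᶜ

/-- The Stone extension `β𝕄 → βℕ` of the projection `ℕ × [0,1] → ℕ`. -/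
def piFull : betaM → betaN :=
  stoneCechExtend (g := fun p : Mspace => (pure p.1 : betaN))
    (continuous_of_discreteTopology.comp continuous_fst)

/-! ### Auxiliary lemmas -/

lemma continuous_piFull : Continuous piFull := continuous_stoneCechExtend _

lemma piFull_unit (p : Mspace) : piFull (stoneCechUnit p) = pure p.1 :=
  congrFun (stoneCechExtend_extends
    (hg := (continuous_of_discreteTopology.comp continuous_fst :
      Continuous fun p : Mspace => (pure p.1 : betaN)))) p

/-- `K A` is the closure in `β𝕄` of `A × [0,1]`. -/
def Kset (A : Set ℕ) : Set betaM :=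
  closure (stoneCechUnit '' (A ×ˢ (univ : Set UnitI)))

lemma Kset_mono {A B : Set ℕ} (h : A ⊆ B) : Kset A ⊆ Kset B :=
  closure_mono (image_mono (prod_mono_left h))

lemma isClosed_Kset (A : Set ℕ) : IsClosed (Kset A) := isClosed_closure

lemma mem_Kset_union (A : Set ℕ) (x : betaM) : x ∈ Kset A ∪ Kset Aᶜ := by
  have hcover : (univ : Set Mspace) = (A ×ˢ (univ : Set UnitI)) ∪ (Aᶜ ×ˢ (univ : Set UnitI)) := by
    ext p
    by_cases h : p.1 ∈ A <;> simp [h]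
  have : (univ : Set betaM) = Kset A ∪ Kset Aᶜ := by
    rw [Kset, Kset, ← closure_union, ← image_union, ← hcover, image_univ,
      denseRange_stoneCechUnit.closure_range]
  exact this ▸ mem_univ x

lemma mem_of_mem_Kset {A : Set ℕ} {x : betaM} (hx : x ∈ Kset A) : A ∈ piFull x := by
  have hclosed : IsClosed (piFull ⁻¹' {v : betaN | A ∈ v}) :=
    (ultrafilter_isClosed_basic A).preimage continuous_piFull
  have hsub : stoneCechUnit '' (A ×ˢ (univ : Set UnitI)) ⊆ piFull ⁻¹' {v : betaN | A ∈ v} := by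
    rintro - ⟨p, ⟨hp, -⟩, rfl⟩
    simp only [mem_preimage, mem_setOf_eq, piFull_unit]
    exact hp
  exact closure_minimal hsub hclosed hx

lemma mem_Kset_of_pi {x : betaM} {u : betaN} (hx : piFull x = u) {A : Set ℕ} (hA : A ∈ u) :
    x ∈ Kset A := by
  rcases mem_Kset_union A x with h | h
  · exact h
  · exact absurd (hx ▸ mem_of_mem_Kset h) (Ultrafilter.compl_notMem_iff.2 hA)

/-- The copy of the fiber `{n} × [0,1]` inside `β𝕄`. -/
def fibn (n : ℕ) : Set betaM := stoneCechUnit '' (({n} : Set ℕ) ×ˢ (univ : Set UnitI))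

lemma fibn_eq (n : ℕ) :
    fibn n = (fun t : ℝ => stoneCechUnit ((n, projIcc (0:ℝ) 1 zero_le_one t) : Mspace)) ''
      Icc (0:ℝ) 1 := by
  ext x
  constructor
  · rintro ⟨⟨m, t⟩, ⟨hm, -⟩, rfl⟩
    rcases hm with rfl
    refine ⟨(t : ℝ), t.2, ?_⟩
    show stoneCechUnit ((m, projIcc (0:ℝ) 1 zero_le_one (t:ℝ)) : Mspace) = stoneCechUnit (m, t)
    rw [projIcc_val]
  · rintro ⟨t, ht, rfl⟩
    exact ⟨(n, projIcc (0:ℝ) 1 zero_le_one t), ⟨rfl, mem_univ _⟩, rfl⟩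

lemma continuous_fibmap (n : ℕ) :
    Continuous (fun t : ℝ => stoneCechUnit ((n, projIcc (0:ℝ) 1 zero_le_one t) : Mspace)) :=
  continuous_stoneCechUnit.comp (continuous_const.prodMk continuous_projIcc)

lemma isCompact_fibn (n : ℕ) : IsCompact (fibn n) := by
  rw [fibn_eq]
  exact isCompact_Icc.image (continuous_fibmap n)

lemma isPreconnected_fibn (n : ℕ) : IsPreconnected (fibn n) := by
  rw [fibn_eq]
  exact isPreconnected_Icc.image _ ((continuous_fibmap n).continuousOn)

lemma Kset_singleton (n : ℕ) : Kset {n} = fibn n :=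
  ((isCompact_fibn n).isClosed).closure_eq

/-- If `piFull x` is principal, then `x` lies in the copy of `𝕄`. -/
lemma mem_Mcopy_of_principal {x : betaM} {n : ℕ} (hx : piFull x = pure n) : x ∈ Mcopy := by
  have h1 : x ∈ Kset {n} := mem_Kset_of_pi hx (by simp)
  rw [Kset_singleton] at h1
  rcases h1 with ⟨p, -, rfl⟩
  exact ⟨p, rfl⟩

lemma pi_mem_Nstar {x : betaM} (hx : x ∈ MstarS) : piFull x ∈ NstarS := by
  rintro ⟨n, hn⟩
  exact hx (mem_Mcopy_of_principal hn.symm)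

/-- Fibers of `piFull` over free ultrafilters avoid the copy of `𝕄`. -/
lemma fiber_subset_Mstar {u : betaN} (hu : u ∈ NstarS) : piFull ⁻¹' {u} ⊆ MstarS := by
  intro x hx
  rintro ⟨p, rfl⟩
  exact hu ⟨p.1, (piFull_unit p).symm.trans hx⟩

/-- Fibers of `piFull` over free ultrafilters are preconnected. -/
lemma fiber_preconnected {u : betaN} (hu : u ∈ NstarS) : IsPreconnected (piFull ⁻¹' {u}) := by
  set s : Set betaM := piFull ⁻¹' {u} with hs
  rw [isPreconnected_closed_iff]
  intro F₁ F₂ hF₁ hF₂ hcov h1 h2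
  by_contra hcon
  push_neg at hcon
  have hsclosed : IsClosed s := isClosed_singleton.preimage continuous_piFull
  have hC₁ : IsCompact (s ∩ F₁) := ((hsclosed.inter hF₁)).isCompact
  have hC₂ : IsCompact (s ∩ F₂) := ((hsclosed.inter hF₂)).isCompact
  have hdisj : Disjoint (s ∩ F₁) (s ∩ F₂) := by
    rw [disjoint_iff_inter_eq_empty, eq_empty_iff_forall_notMem]
    rintro x ⟨⟨hx, hx1⟩, -, hx2⟩
    exact (eq_empty_iff_forall_notMem.1 hcon) x ⟨hx, hx1, hx2⟩
  obtain ⟨U, V, hUopen, hVopen, hCU, hCV, hUV⟩ :=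
    SeparatedNhds.of_isCompact_isCompact hC₁ hC₂ hdisj
  have hsUV : s ⊆ U ∪ V := by
    intro x hx
    rcases hcov hx with h | h
    · exact Or.inl (hCU ⟨hx, h⟩)
    · exact Or.inr (hCV ⟨hx, h⟩)
  -- compactness: some K_B with B ∈ u is inside U ∪ V
  have hKcpt : IsCompact ((U ∪ V)ᶜ) := ((hUopen.union hVopen).isClosed_compl).isCompact
  have hinter : (U ∪ V)ᶜ ∩ ⋂ (A : {A : Set ℕ // A ∈ u}), Kset A = ∅ := by
    rw [eq_empty_iff_forall_notMem]
    rintro x ⟨hxc, hxK⟩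
    rw [mem_iInter] at hxK
    have hle : piFull x = u := by
      apply Ultrafilter.eq_of_le
      intro A hA
      exact mem_of_mem_Kset (hxK ⟨A, hA⟩)
    exact hxc (hsUV hle)
  obtain ⟨t, ht⟩ := hKcpt.elim_finite_subfamily_closed _ (fun A => isClosed_Kset _) hinter
  set B : Set ℕ := (⋂ A ∈ t, (A : Set ℕ)) ∩ univ with hB
  have hBu : B ∈ u := by
    rw [hB]
    exact inter_mem (biInter_finset_mem t |>.2 fun A _ => A.2) univ_mem
  have hKB : Kset B ⊆ U ∪ V := by
    have hBsubA : ∀ A ∈ t, B ⊆ (A : Set ℕ) := by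
      intro A hA n hn
      exact mem_iInter₂.1 hn.1 A hA
    intro x hx
    by_contra hxc
    rw [eq_empty_iff_forall_notMem] at ht
    refine ht x ⟨hxc, ?_⟩
    rw [mem_iInter₂]
    intro A hA
    exact Kset_mono (hBsubA A hA) hx
  -- split B according to whether the fiber copy goes into U or V
  have hfibsub : ∀ n ∈ B, fibn n ⊆ U ∪ V := by
    intro n hn
    refine subset_trans ?_ hKB
    refine subset_trans ?_ subset_closure
    exact image_mono (prod_mono_left (singleton_subset_iff.2 hn))
  have hsplit : ∀ n ∈ B, fibn n ⊆ U ∨ fibn n ⊆ V := by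
    intro n hn
    exact (isPreconnected_fibn n).subset_or_subset hUopen hVopen hUV (hfibsub n hn)
  set BU : Set ℕ := {n | n ∈ B ∧ fibn n ⊆ U} with hBU
  set BV : Set ℕ := {n | n ∈ B ∧ fibn n ⊆ V} with hBV
  have hBsub : B ⊆ BU ∪ BV := by
    intro n hn
    rcases hsplit n hn with h | h
    · exact Or.inl ⟨hn, h⟩
    · exact Or.inr ⟨hn, h⟩
  have hBor : BU ∈ u ∨ BV ∈ u :=
    Ultrafilter.union_mem_iff.1 (u.mem_of_superset hBu hBsub)
  have himg : ∀ (W : Set betaM) (C : Set ℕ), (∀ n ∈ C, fibn n ⊆ W) →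
      stoneCechUnit '' (C ×ˢ (univ : Set UnitI)) ⊆ W := by
    rintro W C hC - ⟨⟨n, tt⟩, ⟨hn, -⟩, rfl⟩
    exact hC n hn ⟨(n, tt), ⟨rfl, mem_univ _⟩, rfl⟩
  rcases hBor with h | h
  · -- fiber ⊆ closure U, contradicting s ∩ F₂ ⊆ V nonempty
    obtain ⟨y, hy⟩ := h2
    have hyV : y ∈ V := hCV hy
    have hyClU : y ∈ closure U := by
      have : y ∈ Kset BU := mem_Kset_of_pi hy.1 h
      exact closure_mono (himg U BU fun n hn => hn.2) this
    have : y ∈ Vᶜ :=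
      closure_minimal (fun z hz hzV => (disjoint_left.1 hUV hz) hzV) hVopen.isClosed_compl hyClU
    exact this hyV
  · obtain ⟨y, hy⟩ := h1
    have hyU : y ∈ U := hCU hy
    have hyClV : y ∈ closure V := by
      have : y ∈ Kset BV := mem_Kset_of_pi hy.1 h
      exact closure_mono (himg V BV fun n hn => hn.2) this
    have : y ∈ Uᶜ :=
      closure_minimal (fun z hz hzU => (disjoint_left.1 hUV hzU) hz) hUopen.isClosed_compl hyClV
    exact this hyU

/-- A continuous section of `piFull`, sending `u` to the limit along `u` of `(n, 0)`. -/
def esec : betaN → betaM :=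
  Ultrafilter.extend (fun n : ℕ => stoneCechUnit ((n, ⟨0, le_refl 0, zero_le_one⟩) : Mspace))

lemma continuous_esec : Continuous esec := continuous_ultrafilter_extend _

lemma pi_esec (u : betaN) : piFull (esec u) = u := by
  have h : piFull ∘ esec = id := by
    apply denseRange_pure.equalizer (continuous_piFull.comp continuous_esec) continuous_id
    funext n
    have h2 : esec (pure n) = stoneCechUnit ((n, ⟨0, le_refl 0, zero_le_one⟩) : Mspace) :=
      congrFun (ultrafilter_extend_extends
        (fun n : ℕ => stoneCechUnit ((n, ⟨0, le_refl 0, zero_le_one⟩) : Mspace))) n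
    simp only [Function.comp_apply, id_eq]
    rw [h2]
    exact piFull_unit _
  exact congrFun h u

lemma esec_mem {u : betaN} (hu : u ∈ NstarS) : esec u ∈ MstarS := by
  rintro ⟨p, hp⟩
  exact hu ⟨p.1, by rw [← piFull_unit p, hp, pi_esec]⟩

/-- The key fact: `piFull ∘ Ψ` is constant on fibers of `piFull`. -/
lemma key (Ψ : ↥MstarS ≃ₜ ↥MstarS) (p q : ↥MstarS) (h : piFull (p : betaM) = piFull (q : betaM)) :
    piFull ((Ψ p : ↥MstarS) : betaM) = piFull ((Ψ q : ↥MstarS) : betaM) := by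
  set u : betaN := piFull (p : betaM) with hu
  have huN : u ∈ NstarS := pi_mem_Nstar p.2
  set S : Set ↥MstarS := (Subtype.val : ↥MstarS → betaM) ⁻¹' (piFull ⁻¹' {u}) with hS
  have hSpre : IsPreconnected S := by
    have hval : Subtype.val '' S = piFull ⁻¹' {u} := by
      rw [hS, Subtype.image_preimage_coe, inter_eq_right.2 (fiber_subset_Mstar huN)]
    have := (IsInducing.subtypeVal (t := MstarS)).isPreconnected_image (s := S)
    rw [hval] at this
    exact this.1 (fiber_preconnected huN)
  have hcont : Continuous fun x : ↥MstarS => piFull ((Ψ x : ↥MstarS) : betaM) :=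
    continuous_piFull.comp (continuous_subtype_val.comp Ψ.continuous)
  have hT : IsPreconnected ((fun x : ↥MstarS => piFull ((Ψ x : ↥MstarS) : betaM)) '' S) :=
    hSpre.image _ hcont.continuousOn
  have hpS : p ∈ S := by simp [hS, hu]
  have hqS : q ∈ S := by simp [hS, hu, ← h]
  exact hT.subsingleton (mem_image_of_mem _ hpS) (mem_image_of_mem _ hqS)

/-- every homeomorphism `Ψ` of `𝕄*` induces a homeomorphism `H` of `ℕ*`
with `H ∘ π = π ∘ Ψ`. -/
theorem exists_induced_homeomorphism (Ψ : ↥MstarS ≃ₜ ↥MstarS) :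
    ∃ H : ↥NstarS ≃ₜ ↥NstarS, ∀ p : ↥MstarS, ∃ hm : piFull (p : betaM) ∈ NstarS,
      ((H ⟨piFull (p : betaM), hm⟩ : ↥NstarS) : betaN) =
        piFull ((Ψ p : ↥MstarS) : betaM) := by
  classical
  -- restricted projection and section
  let φ : ↥MstarS → ↥NstarS := fun x => ⟨piFull (x : betaM), pi_mem_Nstar x.2⟩
  let σ : ↥NstarS → ↥MstarS := fun u => ⟨esec (u : betaN), esec_mem u.2⟩
  have hφσ : ∀ u : ↥NstarS, φ (σ u) = u := fun u => Subtype.ext (pi_esec _)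
  have hφcont : Continuous φ :=
    Continuous.subtype_mk (continuous_piFull.comp continuous_subtype_val) _
  have hσcont : Continuous σ :=
    Continuous.subtype_mk (continuous_esec.comp continuous_subtype_val) _
  let Hf : ↥NstarS → ↥NstarS := fun u => φ (Ψ (σ u))
  let Hg : ↥NstarS → ↥NstarS := fun u => φ (Ψ.symm (σ u))
  have hHfφ : ∀ x : ↥MstarS, Hf (φ x) = φ (Ψ x) := by
    intro x
    apply Subtype.ext
    exact key Ψ (σ (φ x)) x (pi_esec _)
  have hHgφ : ∀ x : ↥MstarS, Hg (φ x) = φ (Ψ.symm x) := by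
    intro x
    apply Subtype.ext
    exact key Ψ.symm (σ (φ x)) x (pi_esec _)
  have hli : Function.LeftInverse Hg Hf := by
    intro u
    show Hg (φ (Ψ (σ u))) = u
    rw [hHgφ (Ψ (σ u)), Ψ.symm_apply_apply, hφσ]
  have hri : Function.RightInverse Hg Hf := by
    intro u
    show Hf (φ (Ψ.symm (σ u))) = u
    rw [hHfφ (Ψ.symm (σ u)), Ψ.apply_symm_apply, hφσ]
  refine ⟨⟨⟨Hf, Hg, hli, hri⟩,
    hφcont.comp (Ψ.continuous.comp hσcont),
    hφcont.comp (Ψ.symm.continuous.comp hσcont)⟩, ?_⟩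
  intro p
  refine ⟨pi_mem_Nstar p.2, ?_⟩
  have : (⟨piFull (p : betaM), pi_mem_Nstar p.2⟩ : ↥NstarS) = φ p := rfl
  rw [this]
  show ((Hf (φ p) : ↥NstarS) : betaN) = _
  rw [hHfφ p]
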